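/- arXiv:1111.6664 — 5 statements merged into one kernel-verified Lean document; each statement's English description precedes it below -/
import Mathlib

section
/- Let I₁, I₂ ⊂ {1,…,n} be disjoint index sets. If Φ satisfies the RIP of order |I₁|+|I₂| with constant δ_{|I₁|+|I₂|} < 1, then for any vector u ∈ ℝⁿ supported on I₂, ‖Φ_{I₁}' Φ_{I₂} u_{I₂}‖₂ ≤ δ_{|I₁|+|I₂|} ‖u‖₂. -/
open Matrix

/-- A vector is K-sparse if it has at most K nonzero entries. -/
def IsSparse {n : ℕ} (K : ℕ) (x : Fin n → ℝ) : Prop :=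
  (Finset.univ.filter fun i => x i ≠ 0).card ≤ K

/-- The Euclidean (ℓ₂) norm of a finitely-indexed real vector. -/
noncomputable def l2norm {ι : Type*} [Fintype ι] (v : ι → ℝ) : ℝ :=
  Real.sqrt (∑ i, v i ^ 2)

/-- Φ satisfies the RIP of order K with constant δ. -/
def SatisfiesRIP {m n : ℕ} (Φ : Matrix (Fin m) (Fin n) ℝ) (K : ℕ) (δ : ℝ) : Prop :=
  ∀ x : Fin n → ℝ, IsSparse K x →
    (1 - δ) * l2norm x ^ 2 ≤ l2norm (Φ.mulVec x) ^ 2 ∧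
    l2norm (Φ.mulVec x) ^ 2 ≤ (1 + δ) * l2norm x ^ 2

/-- The column-submatrix of Φ consisting of columns indexed by I. -/
def colSub {m n : ℕ} (Φ : Matrix (Fin m) (Fin n) ℝ) (I : Finset (Fin n)) :
    Matrix (Fin m) I ℝ :=
  fun i j => Φ i (j : Fin n)

/-- Extension by zero of a vector indexed by `I` to a vector on `Fin n`. -/
def extFun {n : ℕ} (I : Finset (Fin n)) (w : I → ℝ) : Fin n → ℝ :=
  fun i => if h : i ∈ I then w ⟨i, h⟩ else 0

lemma l2norm_sq {ι : Type*} [Fintype ι] (v : ι → ℝ) :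
    l2norm v ^ 2 = ∑ i, v i ^ 2 := by
  rw [l2norm, Real.sq_sqrt]
  positivity

lemma sparse_of_support {n : ℕ} (I₁ I₂ : Finset (Fin n)) (v : Fin n → ℝ)
    (h : ∀ i, i ∉ I₁ ∪ I₂ → v i = 0) : IsSparse (I₁.card + I₂.card) v := by
  unfold IsSparse
  calc (Finset.univ.filter fun i => v i ≠ 0).card
      ≤ (I₁ ∪ I₂).card := by
        apply Finset.card_le_card
        intro i hi
        simp only [Finset.mem_filter] at hi
        by_contra hni
        exact hi.2 (h i hni)
    _ ≤ I₁.card + I₂.card := Finset.card_union_le _ _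

lemma sum_extFun {n : ℕ} (I : Finset (Fin n)) (w : I → ℝ) (g : Fin n → ℝ → ℝ)
    (hg : ∀ j, g j 0 = 0) :
    ∑ j, g j (extFun I w j) = ∑ k : I, g k (w k) :=
  calc ∑ j, g j (extFun I w j)
      = ∑ j ∈ I, g j (extFun I w j) :=
        (Finset.sum_subset I.subset_univ
          (fun j _ hj => by simp [extFun, dif_neg hj, hg])).symm
    _ = ∑ k : I, g (↑k) (extFun I w ↑k) := (Finset.sum_coe_sort I _).symm
    _ = ∑ k : I, g (↑k) (w k) := by
        apply Finset.sum_congr rfl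
        intro k _
        congr 1
        simp [extFun, dif_pos k.2]

lemma mulVec_extFun {m n : ℕ} (Φ : Matrix (Fin m) (Fin n) ℝ) (I : Finset (Fin n))
    (w : I → ℝ) : Φ.mulVec (extFun I w) = (colSub Φ I).mulVec w := by
  funext i
  have h := sum_extFun I w (fun j t => Φ i j * t) (fun j => mul_zero _)
  simpa [Matrix.mulVec, dotProduct, colSub] using h

lemma sumsq_extFun {n : ℕ} (I : Finset (Fin n)) (w : I → ℝ) :
    ∑ i, extFun I w i ^ 2 = ∑ k : I, w k ^ 2 :=
  sum_extFun I w (fun _ t => t ^ 2) (fun _ => by simp)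

lemma dot_mulVec {m : ℕ} {I : Type*} [Fintype I] (M : Matrix (Fin m) I ℝ)
    (w : I → ℝ) (z : Fin m → ℝ) :
    ∑ i, (M.mulVec w) i * z i = ∑ k, w k * (Mᵀ.mulVec z) k := by
  simp only [Matrix.mulVec, dotProduct, Matrix.transpose_apply, Finset.sum_mul,
    Finset.mul_sum]
  rw [Finset.sum_comm]
  apply Finset.sum_congr rfl
  intro k _
  apply Finset.sum_congr rfl
  intro i _
  ring

/-- Key lemma: correlation bound with the average of squared norms. -/
lemma key_correlation {m n : ℕ} (Φ : Matrix (Fin m) (Fin n) ℝ)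
    (I₁ I₂ : Finset (Fin n)) (hdisj : Disjoint I₁ I₂) (δ : ℝ)
    (hRIP : SatisfiesRIP Φ (I₁.card + I₂.card) δ)
    (x y : Fin n → ℝ) (hx : ∀ i, i ∉ I₁ → x i = 0) (hy : ∀ i, i ∉ I₂ → y i = 0) :
    ∑ i, Φ.mulVec x i * Φ.mulVec y i ≤ δ * ((∑ i, x i ^ 2) + ∑ i, y i ^ 2) / 2 := by
  have hcross : ∑ i, x i * y i = 0 := by
    apply Finset.sum_eq_zero
    intro i _
    by_cases hi : i ∈ I₂
    · rw [hx i (Finset.disjoint_right.mp hdisj hi), zero_mul]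
    · rw [hy i hi, mul_zero]
  set S : ℝ := (∑ i, x i ^ 2) + ∑ i, y i ^ 2 with hS
  clear_value S
  have hplus : l2norm (x + y) ^ 2 = S := by
    rw [l2norm_sq]
    have he : ∀ i ∈ Finset.univ, (x + y) i ^ 2
        = x i ^ 2 + y i ^ 2 + 2 * (x i * y i) := by
      intro i _; simp only [Pi.add_apply]; ring
    rw [Finset.sum_congr rfl he, Finset.sum_add_distrib, Finset.sum_add_distrib,
      ← Finset.mul_sum, hcross, hS]
    ring
  have hminus : l2norm (x - y) ^ 2 = S := by
    rw [l2norm_sq]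
    have he : ∀ i ∈ Finset.univ, (x - y) i ^ 2
        = x i ^ 2 + y i ^ 2 - 2 * (x i * y i) := by
      intro i _; simp only [Pi.sub_apply]; ring
    rw [Finset.sum_congr rfl he, Finset.sum_sub_distrib, Finset.sum_add_distrib,
      ← Finset.mul_sum, hcross, hS]
    ring
  have hsparse_plus : IsSparse (I₁.card + I₂.card) (x + y) := by
    apply sparse_of_support
    intro i hi
    rw [Finset.mem_union] at hi
    push_neg at hi
    simp [hx i hi.1, hy i hi.2]
  have hsparse_minus : IsSparse (I₁.card + I₂.card) (x - y) := by
    apply sparse_of_support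
    intro i hi
    rw [Finset.mem_union] at hi
    push_neg at hi
    simp [hx i hi.1, hy i hi.2]
  have h1 := (hRIP (x + y) hsparse_plus).2
  have h2 := (hRIP (x - y) hsparse_minus).1
  rw [hplus] at h1
  rw [hminus] at h2
  have hid : (4 : ℝ) * ∑ i, Φ.mulVec x i * Φ.mulVec y i =
      l2norm (Φ.mulVec (x + y)) ^ 2 - l2norm (Φ.mulVec (x - y)) ^ 2 := by
    rw [l2norm_sq, l2norm_sq, Matrix.mulVec_add, Matrix.mulVec_sub,
      Finset.mul_sum, ← Finset.sum_sub_distrib]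
    apply Finset.sum_congr rfl
    intro i _
    simp only [Pi.add_apply, Pi.sub_apply]
    ring
  linarith

theorem disjoint_correlation_bound {m n : ℕ} (Φ : Matrix (Fin m) (Fin n) ℝ)
    (I₁ I₂ : Finset (Fin n)) (hdisj : Disjoint I₁ I₂) (δ : ℝ) (hδ0 : 0 ≤ δ) (hδ1 : δ < 1)
    (hRIP : SatisfiesRIP Φ (I₁.card + I₂.card) δ)
    (u : Fin n → ℝ) (hsupp : ∀ i, i ∉ I₂ → u i = 0) :
    l2norm ((colSub Φ I₁)ᵀ.mulVec ((colSub Φ I₂).mulVec fun j : I₂ => u j)) ≤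
      δ * l2norm u := by
  set u' : I₂ → ℝ := fun j : I₂ => u j with hu'
  set z : Fin m → ℝ := (colSub Φ I₂).mulVec u' with hz
  set w : I₁ → ℝ := (colSub Φ I₁)ᵀ.mulVec z with hw
  have hu_ext : u = extFun I₂ u' := by
    funext i
    by_cases hi : i ∈ I₂
    · simp [extFun, dif_pos hi, hu']
    · simp [extFun, dif_neg hi, hsupp i hi]
  have hΦu : Φ.mulVec u = z := by
    rw [hu_ext, mulVec_extFun, hz]
  set A : ℝ := ∑ k : I₁, w k ^ 2 with hA
  set B : ℝ := ∑ i, u i ^ 2 with hB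
  have hAnn : 0 ≤ A := by positivity
  have hBnn : 0 ≤ B := by positivity
  -- the dot product exchange identity
  have hshift : ∑ i, ((colSub Φ I₁).mulVec w) i * z i = A := by
    rw [dot_mulVec, hA]
    apply Finset.sum_congr rfl
    intro k _
    rw [hw, pow_two]
  -- key inequality for all scalings c
  have hkey : ∀ c : ℝ, c * A ≤ δ * (c ^ 2 * A + B) / 2 := by
    intro c
    have h := key_correlation Φ I₁ I₂ hdisj δ hRIP (c • extFun I₁ w) u
      (fun i hi => by simp [extFun, dif_neg hi]) hsupp
    rw [Matrix.mulVec_smul] at h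
    rw [mulVec_extFun] at h
    have hl : ∑ i, (c • (colSub Φ I₁).mulVec w) i * Φ.mulVec u i
        = c * A := by
      rw [hΦu, ← hshift, Finset.mul_sum]
      apply Finset.sum_congr rfl
      intro i _
      simp [Pi.smul_apply]
      ring
    have hr : ∑ i, (c • extFun I₁ w) i ^ 2 = c ^ 2 * A := by
      rw [hA, ← sumsq_extFun, Finset.mul_sum]
      apply Finset.sum_congr rfl
      intro i _
      simp [Pi.smul_apply]
      ring
    rw [hl, hr] at h
    exact h
  have hlw : l2norm w = Real.sqrt A := rfl
  have hlu : l2norm u = Real.sqrt B := rfl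
  rw [hlw, hlu]
  set sa := Real.sqrt A with hsa
  set sb := Real.sqrt B with hsb
  have hsa2 : sa ^ 2 = A := Real.sq_sqrt hAnn
  have hsb2 : sb ^ 2 = B := Real.sq_sqrt hBnn
  have hsann : 0 ≤ sa := Real.sqrt_nonneg _
  have hsbnn : 0 ≤ sb := Real.sqrt_nonneg _
  rcases eq_or_lt_of_le hsann with hsa0 | hsa0
  · rw [← hsa0]; positivity
  · rcases eq_or_lt_of_le hsbnn with hsb0 | hsb0
    · -- B = 0, derive contradiction from c = 1
      exfalso
      have h1 := hkey 1
      rw [← hsa2, ← hsb2, ← hsb0] at h1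
      nlinarith
    · have h := hkey (sb / sa)
      have hc1 : sb / sa * A = sb * sa := by
        rw [← hsa2]; field_simp
      have hc2 : (sb / sa) ^ 2 * A = B := by
        rw [← hsa2, ← hsb2]; field_simp
      rw [hc1, hc2, ← hsb2] at h
      nlinarith
end

section
/- Let x be K-sparse with support T, set y = Φx, and let Λ¹ be the N indices of largest |⟨φ_i, y⟩|. If Φ satisfies the RIP of order K+N with δ_{K+N} < √N/(√K + √N), then Λ¹ ∩ T ≠ ∅; i.e., the first iteration of generalized OMP with N selections picks at least one correct index. -/
open Matrix

lemma l2norm_nonneg {ι : Type*} [Fintype ι] (v : ι → ℝ) : 0 ≤ l2norm v := Real.sqrt_nonneg _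

lemma eq_zero_of_l2norm {ι : Type*} [Fintype ι] (v : ι → ℝ) (h : l2norm v = 0) :
    ∀ i, v i = 0 := by
  have h2 : ∑ i, v i ^ 2 = 0 := by
    have := l2norm_sq v; rw [h] at this; linarith [this]
  intro i
  have := (Finset.sum_eq_zero_iff_of_nonneg (fun i _ => sq_nonneg (v i))).mp h2 i (Finset.mem_univ i)
  exact pow_eq_zero_iff (by norm_num) |>.mp this

lemma sparse_of_support_s8 {n K : ℕ} (S : Finset (Fin n)) (hS : S.card ≤ K)
    (x : Fin n → ℝ) (hx : ∀ j ∉ S, x j = 0) : IsSparse K x := by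
  refine le_trans (Finset.card_le_card ?_) hS
  intro j hj
  simp only [Finset.mem_filter] at hj
  by_contra h
  exact hj.2 (hx j h)

lemma mulVec_dot {m n : ℕ} (Φ : Matrix (Fin m) (Fin n) ℝ) (u : Fin n → ℝ) (w : Fin m → ℝ) :
    ∑ i, Φ.mulVec u i * w i = ∑ j, u j * Φᵀ.mulVec w j := by
  simp only [Matrix.mulVec, dotProduct, Matrix.transpose_apply, Finset.sum_mul,
    Finset.mul_sum]
  rw [Finset.sum_comm]
  apply Finset.sum_congr rfl; intros; apply Finset.sum_congr rfl; intros; ring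

lemma cross_bound {m n : ℕ} (Φ : Matrix (Fin m) (Fin n) ℝ) (K : ℕ) (δ : ℝ)
    (hRIP : SatisfiesRIP Φ K δ) (u v : Fin n → ℝ) (A B : Finset (Fin n))
    (hA : ∀ j ∉ A, u j = 0) (hB : ∀ j ∉ B, v j = 0) (hAB : Disjoint A B)
    (hcard : A.card + B.card ≤ K) :
    |∑ i, Φ.mulVec u i * Φ.mulVec v i| ≤ δ * l2norm u * l2norm v := by
  -- key: unscaled bound
  have key : ∀ u' v' : Fin n → ℝ, (∀ j ∉ A, u' j = 0) → (∀ j ∉ B, v' j = 0) →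
      |∑ i, Φ.mulVec u' i * Φ.mulVec v' i| ≤ δ / 2 * (∑ j, u' j ^ 2 + ∑ j, v' j ^ 2) := by
    intro u' v' hA' hB'
    have horth : ∀ j, u' j * v' j = 0 := by
      intro j
      by_cases hj : j ∈ A
      · rw [hB' j (Finset.disjoint_left.mp hAB hj), mul_zero]
      · rw [hA' j hj, zero_mul]
    have hsupp : ∀ j ∉ A ∪ B, (u' j + v' j = 0 ∧ u' j - v' j = 0) := by
      intro j hj
      rw [Finset.mem_union] at hj
      push_neg at hj
      rw [hA' j hj.1, hB' j hj.2]; norm_num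
    have hcardAB : (A ∪ B).card ≤ K := le_trans (Finset.card_union_le A B) hcard
    have hsp : IsSparse K (u' + v') :=
      sparse_of_support_s8 (A ∪ B) hcardAB _ (fun j hj => (hsupp j hj).1)
    have hsm : IsSparse K (u' - v') :=
      sparse_of_support_s8 (A ∪ B) hcardAB _ (fun j hj => (hsupp j hj).2)
    obtain ⟨hp1, hp2⟩ := hRIP _ hsp
    obtain ⟨hm1, hm2⟩ := hRIP _ hsm
    have hnp : l2norm (u' + v') ^ 2 = ∑ j, u' j ^ 2 + ∑ j, v' j ^ 2 := by
      rw [l2norm_sq, ← Finset.sum_add_distrib]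
      apply Finset.sum_congr rfl
      intro j _
      have := horth j
      simp only [Pi.add_apply]
      ring_nf
      nlinarith [horth j]
    have hnm : l2norm (u' - v') ^ 2 = ∑ j, u' j ^ 2 + ∑ j, v' j ^ 2 := by
      rw [l2norm_sq, ← Finset.sum_add_distrib]
      apply Finset.sum_congr rfl
      intro j _
      simp only [Pi.sub_apply]
      nlinarith [horth j]
    have hid : 4 * ∑ i, Φ.mulVec u' i * Φ.mulVec v' i
        = l2norm (Φ.mulVec (u' + v')) ^ 2 - l2norm (Φ.mulVec (u' - v')) ^ 2 := by
      rw [l2norm_sq, l2norm_sq, Matrix.mulVec_add, Matrix.mulVec_sub,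
        ← Finset.sum_sub_distrib, Finset.mul_sum]
      apply Finset.sum_congr rfl
      intro i _
      simp only [Pi.add_apply, Pi.sub_apply]
      ring
    rw [hnp] at hp1 hp2
    rw [hnm] at hm1 hm2
    rw [abs_le]
    constructor <;> nlinarith
  -- scaling
  set a := l2norm u with ha
  set b := l2norm v with hb
  by_cases ha0 : a = 0
  · have hu0 : ∀ j, u j = 0 := eq_zero_of_l2norm u ha0
    have : Φ.mulVec u = 0 := by
      funext i; simp [Matrix.mulVec, dotProduct, hu0]
    rw [this]
    simp [ha0]
  by_cases hb0 : b = 0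
  · have hv0 : ∀ j, v j = 0 := eq_zero_of_l2norm v hb0
    have : Φ.mulVec v = 0 := by
      funext i; simp [Matrix.mulVec, dotProduct, hv0]
    rw [this]
    simp [hb0]
  have hapos : 0 < a := lt_of_le_of_ne (l2norm_nonneg u) (Ne.symm ha0)
  have hbpos : 0 < b := lt_of_le_of_ne (l2norm_nonneg v) (Ne.symm hb0)
  set t := Real.sqrt (b / a) with ht
  have htpos : 0 < t := Real.sqrt_pos.mpr (div_pos hbpos hapos)
  have ht2 : t ^ 2 = b / a := Real.sq_sqrt (le_of_lt (div_pos hbpos hapos))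
  have hbd := key (fun j => t * u j) (fun j => t⁻¹ * v j)
    (fun j hj => by show t * u j = 0; rw [hA j hj, mul_zero])
    (fun j hj => by show t⁻¹ * v j = 0; rw [hB j hj, mul_zero])
  have hmv1 : Φ.mulVec (fun j => t * u j) = fun i => t * Φ.mulVec u i := by
    funext i
    simp [Matrix.mulVec, dotProduct, Finset.mul_sum]
    apply Finset.sum_congr rfl; intros; ring
  have hmv2 : Φ.mulVec (fun j => t⁻¹ * v j) = fun i => t⁻¹ * Φ.mulVec v i := by
    funext i
    simp [Matrix.mulVec, dotProduct, Finset.mul_sum]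
    apply Finset.sum_congr rfl; intros; ring
  rw [hmv1, hmv2] at hbd
  simp only [] at hbd
  have hip : ∑ i, (t * Φ.mulVec u i) * (t⁻¹ * Φ.mulVec v i)
      = ∑ i, Φ.mulVec u i * Φ.mulVec v i := by
    apply Finset.sum_congr rfl
    intro i _
    field_simp
  have hsum1 : ∑ j, (t * u j) ^ 2 = a * b := by
    have : ∑ j, (t * u j) ^ 2 = t ^ 2 * ∑ j, u j ^ 2 := by
      rw [Finset.mul_sum]; apply Finset.sum_congr rfl; intros; ring
    rw [this, ht2, ← l2norm_sq, ← ha]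
    field_simp
  have hsum2 : ∑ j, (t⁻¹ * v j) ^ 2 = a * b := by
    have h1 : ∑ j, (t⁻¹ * v j) ^ 2 = (t ^ 2)⁻¹ * ∑ j, v j ^ 2 := by
      rw [Finset.mul_sum]; apply Finset.sum_congr rfl; intros
      rw [← inv_pow]; ring
    rw [h1, ht2, ← l2norm_sq, ← hb]
    field_simp
  rw [hip, hsum1, hsum2] at hbd
  calc |∑ i, Φ.mulVec u i * Φ.mulVec v i| ≤ δ / 2 * (a * b + a * b) := hbd
    _ = δ * a * b := by ring

theorem gomp_first_iteration_success {m n : ℕ} (Φ : Matrix (Fin m) (Fin n) ℝ)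
    (x : Fin n → ℝ) (hx : x ≠ 0) (K N : ℕ) (hN : 0 < N)
    (T Λ : Finset (Fin n)) (hT : T = Finset.univ.filter fun i => x i ≠ 0)
    (hTK : T.card ≤ K) (hΛ : Λ.card = N) (y : Fin m → ℝ) (hy : y = Φ.mulVec x)
    (hmax : ∀ i ∈ Λ, ∀ j ∉ Λ, |Φᵀ.mulVec y j| ≤ |Φᵀ.mulVec y i|)
    (δ : ℝ) (hRIP : SatisfiesRIP Φ (K + N) δ)
    (hδ : δ < Real.sqrt N / (Real.sqrt K + Real.sqrt N)) :
    (Λ ∩ T).Nonempty := by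
  subst hy
  by_contra hne
  rw [Finset.not_nonempty_iff_eq_empty] at hne
  have hdisj : Disjoint Λ T := Finset.disjoint_iff_inter_eq_empty.mpr hne
  have hxT : ∀ j ∉ T, x j = 0 := by
    intro j hj
    rw [hT] at hj
    simp only [Finset.mem_filter, Finset.mem_univ, true_and, not_not] at hj
    exact hj
  have hxsum : 0 < ∑ j, x j ^ 2 := by
    obtain ⟨j, hj⟩ := Function.ne_iff.mp hx
    have hj' : x j ≠ 0 := hj
    have h1 : 0 < x j ^ 2 := by positivity
    exact lt_of_lt_of_le h1
      (Finset.single_le_sum (fun i _ => sq_nonneg (x i)) (Finset.mem_univ j))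
  have hxpos : 0 < l2norm x := Real.sqrt_pos.mpr hxsum
  have hX2 : 0 < l2norm x ^ 2 := by positivity
  have hxsp : IsSparse (K + N) x :=
    sparse_of_support_s8 T (le_trans hTK (Nat.le_add_right K N)) x hxT
  have hδ0 : 0 ≤ δ := by
    obtain ⟨h1, h2⟩ := hRIP x hxsp
    nlinarith
  set c : Fin n → ℝ := Φᵀ.mulVec (Φ.mulVec x) with hc
  set u : Fin n → ℝ := fun j => if j ∈ Λ then c j else 0 with hu
  have huA : ∀ j ∉ Λ, u j = 0 := fun j hj => by simp [hu, hj]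
  have hcard : Λ.card + T.card ≤ K + N := by rw [hΛ]; omega
  have hux : |∑ i, Φ.mulVec u i * Φ.mulVec x i| ≤ δ * l2norm u * l2norm x :=
    cross_bound Φ (K + N) δ hRIP u x Λ T huA hxT hdisj hcard
  have hid : ∑ i, Φ.mulVec u i * Φ.mulVec x i = ∑ j, u j * c j :=
    mulVec_dot Φ u (Φ.mulVec x)
  have huc : ∑ j, u j * c j = ∑ j, u j ^ 2 := by
    apply Finset.sum_congr rfl
    intro j _
    by_cases hj : j ∈ Λ
    · simp [hu, hj, sq]
    · simp [hu, hj]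
  have hub : l2norm u ≤ δ * l2norm x := by
    have h1 : l2norm u ^ 2 ≤ δ * l2norm x * l2norm u := by
      calc l2norm u ^ 2 = ∑ j, u j ^ 2 := l2norm_sq u
        _ = ∑ i, Φ.mulVec u i * Φ.mulVec x i := by rw [hid, huc]
        _ ≤ |∑ i, Φ.mulVec u i * Φ.mulVec x i| := le_abs_self _
        _ ≤ δ * l2norm u * l2norm x := hux
        _ = δ * l2norm x * l2norm u := by ring
    by_cases hu0 : l2norm u = 0
    · rw [hu0]; exact mul_nonneg hδ0 hxpos.le
    · have h2 : 0 < l2norm u := lt_of_le_of_ne (l2norm_nonneg u) (Ne.symm hu0)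
      nlinarith
  have hΛne : Λ.Nonempty := Finset.card_pos.mp (by rw [hΛ]; exact hN)
  obtain ⟨i₀, hi₀Λ, hi₀⟩ := Finset.exists_min_image Λ (fun j => |c j|) hΛne
  have hNc : (N : ℝ) * c i₀ ^ 2 ≤ (δ * l2norm x) ^ 2 := by
    have h1 : (N : ℝ) * c i₀ ^ 2 = ∑ _j ∈ Λ, c i₀ ^ 2 := by
      rw [Finset.sum_const, hΛ, nsmul_eq_mul]
    have h2 : ∑ _j ∈ Λ, c i₀ ^ 2 ≤ ∑ j ∈ Λ, c j ^ 2 := by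
      apply Finset.sum_le_sum
      intro j hj
      have h3 := hi₀ j hj
      nlinarith [sq_abs (c i₀), sq_abs (c j), abs_nonneg (c i₀), abs_nonneg (c j)]
    have h3 : ∑ j, u j ^ 2 = ∑ j ∈ Λ, c j ^ 2 := by
      have h4 : ∀ j, u j ^ 2 = if j ∈ Λ then c j ^ 2 else 0 := fun j => by
        by_cases hj : j ∈ Λ <;> simp [hu, hj]
      simp_rw [h4]
      rw [Finset.sum_ite_mem, Finset.univ_inter]
    have h5 : l2norm u ^ 2 ≤ (δ * l2norm x) ^ 2 := by
      nlinarith [l2norm_nonneg u]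
    rw [l2norm_sq, h3] at h5
    linarith [h1 ▸ h2]
  have hmin : Real.sqrt N * |c i₀| ≤ δ * l2norm x := by
    have h5 : Real.sqrt ((N : ℝ) * c i₀ ^ 2) ≤ Real.sqrt ((δ * l2norm x) ^ 2) :=
      Real.sqrt_le_sqrt hNc
    rwa [Real.sqrt_mul (Nat.cast_nonneg N), Real.sqrt_sq_eq_abs,
      Real.sqrt_sq (mul_nonneg hδ0 (le_of_lt hxpos))] at h5
  have hTne : T.Nonempty := by
    obtain ⟨j, hj⟩ := Function.ne_iff.mp hx
    have hj' : x j ≠ 0 := hj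
    exact ⟨j, by rw [hT]; simp only [Finset.mem_filter, Finset.mem_univ, true_and]; exact hj'⟩
  obtain ⟨j₀, hj₀T, hj₀⟩ := Finset.exists_max_image T (fun j => |c j|) hTne
  have hj₀Λ : j₀ ∉ Λ := Finset.disjoint_right.mp hdisj hj₀T
  have hj₀i₀ : |c j₀| ≤ |c i₀| := hmax i₀ hi₀Λ j₀ hj₀Λ
  -- Cauchy-Schwarz on T
  have hsK : ∑ j ∈ T, |x j| ≤ Real.sqrt K * l2norm x := by
    have hcs : (∑ j ∈ T, 1 * |x j|) ^ 2 ≤ (∑ j ∈ T, 1 ^ 2) * ∑ j ∈ T, |x j| ^ 2 :=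
      Finset.sum_mul_sq_le_sq_mul_sq T 1 _
    simp only [one_mul, one_pow, Finset.sum_const, nsmul_eq_mul, mul_one, sq_abs] at hcs
    have h1 : ∑ j ∈ T, x j ^ 2 ≤ ∑ j, x j ^ 2 :=
      Finset.sum_le_sum_of_subset_of_nonneg (Finset.subset_univ T)
        (fun i _ _ => sq_nonneg (x i))
    have h2 : (∑ j ∈ T, |x j|) ^ 2 ≤ (K : ℝ) * ∑ j, x j ^ 2 := by
      calc (∑ j ∈ T, |x j|) ^ 2 ≤ (T.card : ℝ) * ∑ j ∈ T, x j ^ 2 := hcs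
        _ ≤ (K : ℝ) * ∑ j, x j ^ 2 := by
            apply mul_le_mul (by exact_mod_cast hTK) h1
              (Finset.sum_nonneg fun i _ => sq_nonneg _) (Nat.cast_nonneg K)
    have h3 : ∑ j ∈ T, |x j| = Real.sqrt ((∑ j ∈ T, |x j|) ^ 2) :=
      (Real.sqrt_sq (Finset.sum_nonneg fun i _ => abs_nonneg _)).symm
    rw [h3]
    calc Real.sqrt ((∑ j ∈ T, |x j|) ^ 2) ≤ Real.sqrt ((K : ℝ) * ∑ j, x j ^ 2) :=
          Real.sqrt_le_sqrt h2
      _ = Real.sqrt K * l2norm x := by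
          rw [Real.sqrt_mul (Nat.cast_nonneg K)]; rfl
  -- lower bound side
  have hlow : (1 - δ) * l2norm x ^ 2 ≤ Real.sqrt K * l2norm x * |c j₀| := by
    obtain ⟨h1, _⟩ := hRIP x hxsp
    have h2 : l2norm (Φ.mulVec x) ^ 2 = ∑ j, x j * c j := by
      rw [l2norm_sq]
      calc ∑ i, Φ.mulVec x i ^ 2 = ∑ i, Φ.mulVec x i * Φ.mulVec x i := by
            apply Finset.sum_congr rfl; intros; ring
        _ = ∑ j, x j * c j := mulVec_dot Φ x (Φ.mulVec x)
    have h3 : ∑ j, x j * c j = ∑ j ∈ T, x j * c j :=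
      (Finset.sum_subset (Finset.subset_univ T)
        (fun j _ hj => by rw [hxT j hj, zero_mul])).symm
    have h4 : ∑ j ∈ T, x j * c j ≤ ∑ j ∈ T, |x j| * |c j₀| := by
      apply Finset.sum_le_sum
      intro j hj
      calc x j * c j ≤ |x j * c j| := le_abs_self _
        _ = |x j| * |c j| := abs_mul _ _
        _ ≤ |x j| * |c j₀| := mul_le_mul_of_nonneg_left (hj₀ j hj) (abs_nonneg _)
    have h5 : ∑ j ∈ T, |x j| * |c j₀| = (∑ j ∈ T, |x j|) * |c j₀| := by
      rw [Finset.sum_mul]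
    have h6 : (∑ j ∈ T, |x j|) * |c j₀| ≤ Real.sqrt K * l2norm x * |c j₀| :=
      mul_le_mul_of_nonneg_right hsK (abs_nonneg _)
    calc (1 - δ) * l2norm x ^ 2 ≤ l2norm (Φ.mulVec x) ^ 2 := h1
      _ = ∑ j, x j * c j := h2
      _ = ∑ j ∈ T, x j * c j := h3
      _ ≤ ∑ j ∈ T, |x j| * |c j₀| := h4
      _ = (∑ j ∈ T, |x j|) * |c j₀| := h5
      _ ≤ Real.sqrt K * l2norm x * |c j₀| := h6
  -- combine everything
  have hsNpos : 0 < Real.sqrt N := Real.sqrt_pos.mpr (by exact_mod_cast hN)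
  have hsK0 : 0 ≤ Real.sqrt K := Real.sqrt_nonneg _
  have hkey : (1 - δ) * Real.sqrt N ≤ δ * Real.sqrt K := by
    have s1 : Real.sqrt K * l2norm x * |c j₀| ≤ Real.sqrt K * l2norm x * |c i₀| :=
      mul_le_mul_of_nonneg_left hj₀i₀ (mul_nonneg hsK0 (le_of_lt hxpos))
    have s2 : (1 - δ) * l2norm x ^ 2 * Real.sqrt N
        ≤ Real.sqrt K * l2norm x * |c i₀| * Real.sqrt N :=
      mul_le_mul_of_nonneg_right (le_trans hlow s1) (le_of_lt hsNpos)
    have s3 : Real.sqrt K * l2norm x * (Real.sqrt N * |c i₀|)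
        ≤ Real.sqrt K * l2norm x * (δ * l2norm x) :=
      mul_le_mul_of_nonneg_left hmin (mul_nonneg hsK0 (le_of_lt hxpos))
    nlinarith [hX2]
  have hcontra : Real.sqrt N / (Real.sqrt K + Real.sqrt N) ≤ δ := by
    rw [div_le_iff₀ (by linarith)]
    nlinarith
  linarith
end

section
/- Suppose x is 1-sparse with nonzero entry at index u and y = Φx. If Φ satisfies the RIP of order 2 with δ₂ < 1/2, then |⟨φ_u, y⟩| > |⟨φ_i, y⟩| for every i ≠ u, so the index of largest correlation is the true support index. -/
open Matrix

lemma rip_pair {m n : ℕ} (Φ : Matrix (Fin m) (Fin n) ℝ) {δ : ℝ}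
    (hRIP : SatisfiesRIP Φ 2 δ) (u i : Fin n) (hiu : i ≠ u) (a b : ℝ) :
    (1 - δ) * (a ^ 2 + b ^ 2) ≤ ∑ k, (a * Φ k u + b * Φ k i) ^ 2 ∧
    ∑ k, (a * Φ k u + b * Φ k i) ^ 2 ≤ (1 + δ) * (a ^ 2 + b ^ 2) := by
  set v : Fin n → ℝ := fun j => if j = u then a else if j = i then b else 0 with hv
  have hsp : IsSparse 2 v := by
    have hsub : (Finset.univ.filter fun j => v j ≠ 0) ⊆ {u, i} := by
      intro j hj
      simp only [Finset.mem_filter, hv] at hj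
      by_contra h
      simp only [Finset.mem_insert, Finset.mem_singleton, not_or] at h
      simp [h.1, h.2] at hj
    calc (Finset.univ.filter fun j => v j ≠ 0).card ≤ ({u, i} : Finset (Fin n)).card :=
          Finset.card_le_card hsub
      _ ≤ 2 := by
          classical
          calc ({u, i} : Finset (Fin n)).card ≤ ({i} : Finset (Fin n)).card + 1 :=
                Finset.card_insert_le u {i}
            _ = 2 := by simp
  have hvz : ∀ j, j ≠ u → j ≠ i → v j = 0 := by
    intro j h1 h2; simp [hv, h1, h2]
  have hsum : ∀ (f : Fin n → ℝ), (∀ j, j ≠ u → j ≠ i → f j = 0) →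
      ∑ j, f j = f u + f i := by
    intro f hf
    rw [← Finset.sum_subset (Finset.subset_univ {u, i})
      (fun j _ hj => by
        simp only [Finset.mem_insert, Finset.mem_singleton, not_or] at hj
        exact hf j hj.1 hj.2)]
    exact Finset.sum_pair (Ne.symm hiu)
  have hmul : ∀ k, Φ.mulVec v k = a * Φ k u + b * Φ k i := by
    intro k
    unfold Matrix.mulVec dotProduct
    rw [hsum (fun j => Φ k j * v j) (fun j h1 h2 => by show Φ k j * v j = 0; rw [hvz j h1 h2, mul_zero])]
    simp [hv, Ne.symm hiu, hiu]
    ring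
  have hnv : l2norm v ^ 2 = a ^ 2 + b ^ 2 := by
    rw [l2norm_sq]
    rw [hsum (fun j => v j ^ 2) (fun j h1 h2 => by show v j ^ 2 = 0; rw [hvz j h1 h2]; ring)]
    simp [hv, hiu]
  have hnΦ : l2norm (Φ.mulVec v) ^ 2 = ∑ k, (a * Φ k u + b * Φ k i) ^ 2 := by
    rw [l2norm_sq]
    exact Finset.sum_congr rfl fun k _ => by rw [hmul k]
  obtain ⟨h1, h2⟩ := hRIP v hsp
  rw [hnv, hnΦ] at h1 h2
  exact ⟨h1, h2⟩

theorem omp_one_sparse_recovery {m n : ℕ} (Φ : Matrix (Fin m) (Fin n) ℝ)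
    (x : Fin n → ℝ) (u : Fin n) (hu : x u ≠ 0) (hsupp : ∀ i, i ≠ u → x i = 0)
    (y : Fin m → ℝ) (hy : y = Φ.mulVec x)
    (δ : ℝ) (hRIP : SatisfiesRIP Φ 2 δ) (hδ : δ < 1 / 2) :
    ∀ i, i ≠ u → |Φᵀ.mulVec y i| < |Φᵀ.mulVec y u| := by
  intro i hiu
  subst hy
  set A : ℝ := ∑ k, Φ k u ^ 2 with hA
  set B : ℝ := ∑ k, Φ k i ^ 2 with hB
  set C : ℝ := ∑ k, Φ k u * Φ k i with hC
  have hkey : ∀ j, Φᵀ.mulVec (Φ.mulVec x) j = x u * ∑ k, Φ k j * Φ k u := by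
    intro j
    unfold Matrix.mulVec dotProduct
    simp only [Matrix.transpose_apply]
    calc ∑ k, Φ k j * ∑ l, Φ k l * x l = ∑ k, x u * (Φ k j * Φ k u) := by
          refine Finset.sum_congr rfl fun k _ => ?_
          rw [Finset.sum_eq_single u (fun l _ hl => by rw [hsupp l hl, mul_zero])
            (fun h => absurd (Finset.mem_univ u) h)]
          ring
      _ = x u * ∑ k, Φ k j * Φ k u := by rw [Finset.mul_sum]
  have hexp : ∀ a b : ℝ, ∑ k, (a * Φ k u + b * Φ k i) ^ 2
      = a ^ 2 * A + 2 * a * b * C + b ^ 2 * B := by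
    intro a b
    simp only [hA, hB, hC, Finset.mul_sum, ← Finset.sum_add_distrib]
    exact Finset.sum_congr rfl fun k _ => by ring
  obtain ⟨hp1, hp2⟩ := rip_pair Φ hRIP u i hiu 1 1
  obtain ⟨hm1, hm2⟩ := rip_pair Φ hRIP u i hiu 1 (-1)
  obtain ⟨hz1, hz2⟩ := rip_pair Φ hRIP u i hiu 1 0
  rw [hexp 1 1] at hp1 hp2
  rw [hexp 1 (-1)] at hm1 hm2
  rw [hexp 1 0] at hz1
  have hCle : |C| ≤ δ := by
    rw [abs_le]; constructor <;> nlinarith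
  have hAge : 1 - δ ≤ A := by nlinarith
  have hδpos : (0:ℝ) < 1 - δ := by
    have : |C| ≥ 0 := abs_nonneg C
    linarith [le_trans this hCle]
  rw [hkey i, hkey u, abs_mul, abs_mul]
  have hCi : (∑ k, Φ k i * Φ k u) = C := by
    rw [hC]; exact Finset.sum_congr rfl fun k _ => mul_comm _ _
  have hCu : (∑ k, Φ k u * Φ k u) = A := by
    rw [hA]; exact Finset.sum_congr rfl fun k _ => (sq (Φ k u)).symm
  rw [hCi, hCu]
  have hxu : 0 < |x u| := abs_pos.mpr hu
  have hAabs : |A| = A := abs_of_pos (lt_of_lt_of_le hδpos hAge)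
  rw [hAabs]
  apply mul_lt_mul_of_pos_left _ hxu
  calc |C| ≤ δ := hCle
    _ < 1 - δ := by linarith
    _ ≤ A := hAge
end

section
/- Let x be K-sparse with support T, let Λᵏ ⊂ {1,…,n} with |Λᵏ| = Nk and |T ∩ Λᵏ| = l < K, and let rᵏ = P_{Λᵏ}^⊥ Φ x be the residual. Let W be the set of N indices in F = {1,…,n}\(Λᵏ ∪ T) with largest |⟨φ_j, rᵏ⟩|, and let α_N be the N-th largest such value. If the relevant RIP constants of Φ are less than 1, then α_N ≤ (δ_{N+K-l} + δ_{N+Nk} δ_{Nk+K-l}/(1-δ_{Nk})) · ‖x_{T\Λᵏ}‖₂ / √N. -/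
open Matrix

lemma eq_zero_of_l2norm_eq_zero {ι : Type*} [Fintype ι] {v : ι → ℝ}
    (h : l2norm v = 0) (i : ι) : v i = 0 := by
  have hs : ∑ j, v j ^ 2 = 0 := by
    have := congrArg (· ^ 2) h
    simpa [l2norm_sq] using this
  have := (Finset.sum_eq_zero_iff_of_nonneg (fun j _ => sq_nonneg (v j))).mp hs i (Finset.mem_univ i)
  exact pow_eq_zero_iff (by norm_num) |>.mp this

lemma l2norm_smul {ι : Type*} [Fintype ι] (c : ℝ) (v : ι → ℝ) :
    l2norm (c • v) = |c| * l2norm v := by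
  unfold l2norm
  have : ∑ i, (c • v) i ^ 2 = c ^ 2 * ∑ i, v i ^ 2 := by
    rw [Finset.mul_sum]; congr 1; ext i; simp [mul_pow]
  rw [this, Real.sqrt_mul (sq_nonneg c), Real.sqrt_sq_eq_abs]

lemma l2norm_add_sq {ι : Type*} [Fintype ι] (a b : ι → ℝ) :
    l2norm (a + b) ^ 2 = l2norm a ^ 2 + 2 * (a ⬝ᵥ b) + l2norm b ^ 2 := by
  simp only [l2norm_sq, dotProduct, Pi.add_apply]
  rw [Finset.mul_sum, ← Finset.sum_add_distrib, ← Finset.sum_add_distrib]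
  congr 1; ext i; ring

lemma l2norm_sub_sq {ι : Type*} [Fintype ι] (a b : ι → ℝ) :
    l2norm (a - b) ^ 2 = l2norm a ^ 2 - 2 * (a ⬝ᵥ b) + l2norm b ^ 2 := by
  simp only [l2norm_sq, dotProduct, Pi.sub_apply]
  rw [Finset.mul_sum, ← Finset.sum_sub_distrib, ← Finset.sum_add_distrib]
  congr 1; ext i; ring

lemma isSparse_of_subset {n s : ℕ} {u : Fin n → ℝ} {S : Finset (Fin n)}
    (h : ∀ i, u i ≠ 0 → i ∈ S) (hcard : S.card ≤ s) : IsSparse s u :=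
  le_trans (Finset.card_le_card fun i hi => h i (Finset.mem_filter.mp hi).2) hcard

lemma rip_dotProduct {m n s : ℕ} {δ : ℝ} (Φ : Matrix (Fin m) (Fin n) ℝ)
    (hδ : 0 ≤ δ) (hRIP : SatisfiesRIP Φ s δ) (u v : Fin n → ℝ)
    (hdisj : ∀ i, u i = 0 ∨ v i = 0)
    (hsp : ∀ a b : ℝ, IsSparse s (a • u + b • v)) :
    |Φ.mulVec u ⬝ᵥ Φ.mulVec v| ≤ δ * (l2norm u * l2norm v) := by
  rcases eq_or_lt_of_le (l2norm_nonneg u) with hu0 | hu0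
  · have : u = 0 := funext fun i => eq_zero_of_l2norm_eq_zero hu0.symm i
    rw [this]; simp only [Matrix.mulVec_zero, zero_dotProduct, abs_zero]
    exact mul_nonneg hδ (mul_nonneg (l2norm_nonneg _) (l2norm_nonneg _))
  rcases eq_or_lt_of_le (l2norm_nonneg v) with hv0 | hv0
  · have : v = 0 := funext fun i => eq_zero_of_l2norm_eq_zero hv0.symm i
    rw [this]; simp only [Matrix.mulVec_zero, dotProduct_zero, abs_zero]
    exact mul_nonneg hδ (mul_nonneg (l2norm_nonneg _) (l2norm_nonneg _))
  set a := l2norm u with ha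
  set b := l2norm v with hb
  set u' := a⁻¹ • u with hu'
  set v' := b⁻¹ • v with hv'
  have hnu' : l2norm u' = 1 := by
    rw [hu', l2norm_smul, abs_of_pos (inv_pos.mpr hu0), inv_mul_cancel₀ (ne_of_gt hu0)]
  have hnv' : l2norm v' = 1 := by
    rw [hv', l2norm_smul, abs_of_pos (inv_pos.mpr hv0), inv_mul_cancel₀ (ne_of_gt hv0)]
  have hcross : u' ⬝ᵥ v' = 0 := by
    apply Finset.sum_eq_zero; intro i _
    rcases hdisj i with h | h <;> simp [hu', hv', h]
  have hsum2 : l2norm (u' + v') ^ 2 = 2 := by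
    rw [l2norm_add_sq, hnu', hnv', hcross]; ring
  have hdiff2 : l2norm (u' - v') ^ 2 = 2 := by
    rw [l2norm_sub_sq, hnu', hnv', hcross]; ring
  have h₁ := hRIP (u' + v') (hsp a⁻¹ b⁻¹)
  have h₂ := hRIP (u' - v') (by
    have : u' - v' = a⁻¹ • u + (-b⁻¹) • v := by
      simp [hu', hv', sub_eq_add_neg, neg_smul]
    rw [this]; exact hsp a⁻¹ (-b⁻¹))
  rw [hsum2] at h₁
  rw [hdiff2] at h₂
  set D := Φ.mulVec u' ⬝ᵥ Φ.mulVec v' with hD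
  have hPe : l2norm (Φ.mulVec (u' + v')) ^ 2
      = l2norm (Φ.mulVec u') ^ 2 + 2 * D + l2norm (Φ.mulVec v') ^ 2 := by
    rw [Matrix.mulVec_add, l2norm_add_sq]
  have hQe : l2norm (Φ.mulVec (u' - v')) ^ 2
      = l2norm (Φ.mulVec u') ^ 2 - 2 * D + l2norm (Φ.mulVec v') ^ 2 := by
    rw [Matrix.mulVec_sub, l2norm_sub_sq]
  have hDle : |D| ≤ δ := by
    rw [abs_le]
    constructor <;> [nlinarith [h₁.1, h₂.2]; nlinarith [h₁.2, h₂.1]]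
  have hue : u = a • u' := by
    rw [hu', smul_smul, mul_inv_cancel₀ (ne_of_gt hu0), one_smul]
  have hve : v = b • v' := by
    rw [hv', smul_smul, mul_inv_cancel₀ (ne_of_gt hv0), one_smul]
  have key : ∀ (c d : ℝ) (p q : Fin n → ℝ),
      Φ.mulVec (c • p) ⬝ᵥ Φ.mulVec (d • q) = c * d * (Φ.mulVec p ⬝ᵥ Φ.mulVec q) := by
    intro c d p q
    rw [Matrix.mulVec_smul, Matrix.mulVec_smul, smul_dotProduct, dotProduct_smul,
      smul_eq_mul, smul_eq_mul]
    ring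
  have : Φ.mulVec u ⬝ᵥ Φ.mulVec v = (a * b) * D := by
    rw [hD, hue, hve, key]
  rw [this, abs_mul, abs_of_pos (mul_pos hu0 hv0)]
  calc a * b * |D| ≤ a * b * δ := by
        exact mul_le_mul_of_nonneg_left hDle (le_of_lt (mul_pos hu0 hv0))
    _ = δ * (a * b) := by ring

lemma mulVec_eq_colSub {m n : ℕ} (Φ : Matrix (Fin m) (Fin n) ℝ) (Λ : Finset (Fin n))
    (w : Fin n → ℝ) (hw : ∀ i ∉ Λ, w i = 0) :
    Φ.mulVec w = (colSub Φ Λ).mulVec (fun j : Λ => w ↑j) := by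
  funext i
  show ∑ j, Φ i j * w j = ∑ j : Λ, Φ i (↑j) * w ↑j
  rw [Finset.sum_coe_sort Λ (fun j => Φ i j * w j)]
  exact (Finset.sum_subset (Finset.subset_univ Λ)
    (fun j _ hj => by rw [hw j hj, mul_zero])).symm

theorem alphaN_upper_bound {m n : ℕ} (Φ : Matrix (Fin m) (Fin n) ℝ)
    (x : Fin n → ℝ) (K N k l : ℕ) (hN : 0 < N) (hlK : l < K)
    (T Λ : Finset (Fin n)) (hT : T = Finset.univ.filter fun i => x i ≠ 0)
    (hTK : T.card = K) (hΛ : Λ.card = N * k) (hl : (T ∩ Λ).card = l)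
    (hrank : IsUnit ((colSub Φ Λ)ᵀ * colSub Φ Λ))
    (r : Fin m → ℝ)
    (hr : r = Φ.mulVec x -
      (colSub Φ Λ * ((colSub Φ Λ)ᵀ * colSub Φ Λ)⁻¹ * (colSub Φ Λ)ᵀ).mulVec (Φ.mulVec x))
    (W : Finset (Fin n)) (hWne : W.Nonempty)
    (hWF : W ⊆ Finset.univ \ (Λ ∪ T)) (hWcard : W.card = N)
    (hWmax : ∀ i ∈ W, ∀ j ∈ (Finset.univ \ (Λ ∪ T)) \ W,
      |Φᵀ.mulVec r j| ≤ |Φᵀ.mulVec r i|)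
    (δ₁ δ₂ δ₃ δ₄ : ℝ)
    (hδ₁ : 0 ≤ δ₁) (hδ₁' : δ₁ < 1) (hRIP₁ : SatisfiesRIP Φ (N + K - l) δ₁)
    (hδ₂ : 0 ≤ δ₂) (hδ₂' : δ₂ < 1) (hRIP₂ : SatisfiesRIP Φ (N + N * k) δ₂)
    (hδ₃ : 0 ≤ δ₃) (hδ₃' : δ₃ < 1) (hRIP₃ : SatisfiesRIP Φ (N * k + K - l) δ₃)
    (hδ₄ : 0 ≤ δ₄) (hδ₄' : δ₄ < 1) (hRIP₄ : SatisfiesRIP Φ (N * k) δ₄) :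
    W.inf' hWne (fun j => |Φᵀ.mulVec r j|) ≤
      (δ₁ + δ₂ * δ₃ / (1 - δ₄)) * Real.sqrt (∑ i ∈ T \ Λ, x i ^ 2) / Real.sqrt N := by
  classical
  set A := colSub Φ Λ with hAdef
  set G := Aᵀ * A with hGdef
  have hdet : IsUnit G.det := (Matrix.isUnit_iff_isUnit_det G).mp hrank
  set M := A * G⁻¹ * Aᵀ with hMdef
  have hδ₄pos : (0:ℝ) < 1 - δ₄ := by linarith
  -- support of x
  have hxzero : ∀ i, i ∉ T → x i = 0 := by
    intro i hi; by_contra hne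
    exact hi (hT ▸ Finset.mem_filter.mpr ⟨Finset.mem_univ i, hne⟩)
  have hxT : ∀ i, x i ≠ 0 → i ∈ T := fun i h =>
    hT ▸ Finset.mem_filter.mpr ⟨Finset.mem_univ i, h⟩
  -- decomposition of x
  set v : Fin n → ℝ := fun i => if i ∈ Λ then 0 else x i with hvdef
  set w : Fin n → ℝ := fun i => if i ∈ Λ then x i else 0 with hwdef
  have hxvw : x = v + w := by
    funext i; by_cases h : i ∈ Λ <;> simp [hvdef, hwdef, h]
  have hw0 : ∀ i ∉ Λ, w i = 0 := fun i hi => by simp [hwdef, hi]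
  have hMA : M * A = A := by
    rw [hMdef, Matrix.mul_assoc (A * G⁻¹), ← hGdef, Matrix.mul_assoc,
      Matrix.nonsing_inv_mul G hdet, Matrix.mul_one]
  have hMw : M.mulVec (Φ.mulVec w) = Φ.mulVec w := by
    rw [mulVec_eq_colSub Φ Λ w hw0, ← hAdef, Matrix.mulVec_mulVec, hMA]
  have hrv : r = Φ.mulVec v - M.mulVec (Φ.mulVec v) := by
    have hx' : Φ.mulVec x = Φ.mulVec v + Φ.mulVec w := by
      rw [hxvw, Matrix.mulVec_add]
    rw [hr, hx', Matrix.mulVec_add, hMw]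
    abel
  -- the z vector
  set z : Λ → ℝ := (G⁻¹ * Aᵀ).mulVec (Φ.mulVec v) with hzdef
  have hMv : M.mulVec (Φ.mulVec v) = A.mulVec z := by
    rw [hMdef, hzdef]
    conv_rhs => rw [Matrix.mulVec_mulVec]
    rw [← Matrix.mul_assoc]
  set zt : Fin n → ℝ := fun i => if h : i ∈ Λ then z ⟨i, h⟩ else 0 with hztdef
  have hzt0 : ∀ i ∉ Λ, zt i = 0 := fun i hi => by simp [hztdef, hi]
  have hΦzt : Φ.mulVec zt = A.mulVec z := by
    rw [mulVec_eq_colSub Φ Λ zt hzt0, ← hAdef]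
    have : (fun j : Λ => zt ↑j) = z := by
      funext j
      simp only [hztdef]
      rw [dif_pos j.2]
    rw [this]
  have hGz : G.mulVec z = Aᵀ.mulVec (Φ.mulVec v) := by
    rw [hzdef]
    conv_lhs => rw [Matrix.mulVec_mulVec]
    rw [← Matrix.mul_assoc, Matrix.mul_nonsing_inv G hdet, Matrix.one_mul]
  have adj : ∀ (y : Fin m → ℝ) (p : Λ → ℝ),
      A.mulVec p ⬝ᵥ y = p ⬝ᵥ Aᵀ.mulVec y := by
    intro y p
    rw [dotProduct_comm, Matrix.dotProduct_mulVec, ← Matrix.mulVec_transpose,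
      dotProduct_comm]
  have hkey : l2norm (Φ.mulVec zt) ^ 2 = Φ.mulVec zt ⬝ᵥ Φ.mulVec v := by
    have h1 : l2norm (Φ.mulVec zt) ^ 2 = Φ.mulVec zt ⬝ᵥ Φ.mulVec zt := by
      rw [l2norm_sq]; simp [dotProduct, sq]
    rw [h1, hΦzt, adj, adj]
    congr 1
    rw [Matrix.mulVec_mulVec, ← hGdef, hGz]
  clear_value A G M
  -- supports
  have hWmem : ∀ j ∈ W, j ∉ Λ ∧ j ∉ T := by
    intro j hj
    have := hWF hj
    rw [Finset.mem_sdiff, Finset.mem_union] at this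
    exact ⟨fun h => this.2 (Or.inl h), fun h => this.2 (Or.inr h)⟩
  have hvsupp : ∀ i, v i ≠ 0 → i ∈ T \ Λ := by
    intro i hi
    by_cases h : i ∈ Λ
    · simp [hvdef, h] at hi
    · have hx : x i ≠ 0 := by simpa [hvdef, h] using hi
      exact Finset.mem_sdiff.mpr ⟨hxT i hx, h⟩
  have hztsupp : ∀ i, zt i ≠ 0 → i ∈ Λ := by
    intro i hi
    by_contra h
    exact hi (hzt0 i h)
  -- the u₀ vector
  set f : Fin n → ℝ := Φᵀ.mulVec r with hfdef
  set u₀ : Fin n → ℝ := fun j => if j ∈ W then f j else 0 with hu₀def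
  have hu₀supp : ∀ j, u₀ j ≠ 0 → j ∈ W := by
    intro j hj
    by_contra h
    simp [hu₀def, h] at hj
  set c := l2norm u₀ with hcdef
  have hcnn : 0 ≤ c := hcdef ▸ l2norm_nonneg _
  set α := W.inf' hWne (fun j => |f j|) with hαdef
  have hα0 : 0 ≤ α := hαdef ▸ Finset.le_inf' hWne _ (fun j _ => abs_nonneg _)
  have hcW : c ^ 2 = ∑ j ∈ W, f j ^ 2 := by
    rw [hcdef, l2norm_sq]
    calc ∑ j, u₀ j ^ 2 = ∑ j, if j ∈ W then f j ^ 2 else 0 := by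
          apply Finset.sum_congr rfl
          intro j _
          by_cases h : j ∈ W <;> simp [hu₀def, h]
      _ = ∑ j ∈ W, f j ^ 2 := by rw [Finset.sum_ite_mem, Finset.univ_inter]
  have hNα : (N : ℝ) * α ^ 2 ≤ c ^ 2 := by
    rw [hcW, ← hWcard]
    calc ((W.card : ℝ)) * α ^ 2 = ∑ _j ∈ W, α ^ 2 := by
          rw [Finset.sum_const, nsmul_eq_mul]
      _ ≤ ∑ j ∈ W, f j ^ 2 := by
          apply Finset.sum_le_sum
          intro j hj
          have h1 : α ≤ |f j| := hαdef ▸ Finset.inf'_le _ hj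
          nlinarith [sq_abs (f j)]
  have hc2 : c ^ 2 = Φ.mulVec u₀ ⬝ᵥ r := by
    have h1 : Φ.mulVec u₀ ⬝ᵥ r = u₀ ⬝ᵥ f := by
      rw [hfdef, Matrix.mulVec_transpose, dotProduct_comm, Matrix.dotProduct_mulVec,
        dotProduct_comm]
    rw [h1, hcW]
    symm
    calc u₀ ⬝ᵥ f = ∑ j, u₀ j * f j := rfl
      _ = ∑ j, if j ∈ W then f j ^ 2 else 0 := by
          apply Finset.sum_congr rfl
          intro j _
          by_cases h : j ∈ W <;> simp [hu₀def, h, sq]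
      _ = ∑ j ∈ W, f j ^ 2 := by rw [Finset.sum_ite_mem, Finset.univ_inter]
  clear_value v w z zt f u₀ c α
  -- cardinality facts
  have hlK' : l ≤ K := le_of_lt hlK
  have hTΛcard : (T \ Λ).card = K - l := by
    have := Finset.card_sdiff_add_card_inter T Λ
    omega
  have hcard1 : (W ∪ (T \ Λ)).card ≤ N + K - l := by
    have := Finset.card_union_le W (T \ Λ)
    omega
  have hcard2 : (W ∪ Λ).card ≤ N + N * k := by
    have := Finset.card_union_le W Λ
    omega
  have hcard3 : (Λ ∪ (T \ Λ)).card ≤ N * k + K - l := by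
    have := Finset.card_union_le Λ (T \ Λ)
    omega
  -- sparsity closures
  have sp : ∀ (s : ℕ) (p q : Fin n → ℝ) (S₁ S₂ : Finset (Fin n)),
      (∀ i, p i ≠ 0 → i ∈ S₁) → (∀ i, q i ≠ 0 → i ∈ S₂) → (S₁ ∪ S₂).card ≤ s →
      ∀ a b : ℝ, IsSparse s (a • p + b • q) := by
    intro s p q S₁ S₂ h₁ h₂ hcard a b
    apply isSparse_of_subset _ hcard
    intro i hi
    rw [Finset.mem_union]
    by_contra h
    push_neg at h
    have hp : p i = 0 := by
      by_contra hp; exact h.1 (h₁ i hp)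
    have hq : q i = 0 := by
      by_contra hq; exact h.2 (h₂ i hq)
    simp [hp, hq] at hi
  -- bounds
  set V := l2norm v with hVdef
  have hVnn : 0 ≤ V := hVdef ▸ l2norm_nonneg _
  set Z := l2norm zt with hZdef
  have hZnn : 0 ≤ Z := hZdef ▸ l2norm_nonneg _
  have ht1 : |Φ.mulVec u₀ ⬝ᵥ Φ.mulVec v| ≤ δ₁ * (c * V) := by
    rw [hcdef, hVdef]
    apply rip_dotProduct Φ hδ₁ hRIP₁
    · intro i
      by_cases h : u₀ i = 0
      · exact Or.inl h
      · right
        rcases hWmem i (hu₀supp i h) with ⟨h1, h2⟩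
        simp [hvdef, h1, hxzero i h2]
    · exact sp _ _ _ W (T \ Λ) hu₀supp hvsupp hcard1
  have ht2 : |Φ.mulVec u₀ ⬝ᵥ Φ.mulVec zt| ≤ δ₂ * (c * Z) := by
    rw [hcdef, hZdef]
    apply rip_dotProduct Φ hδ₂ hRIP₂
    · intro i
      by_cases h : u₀ i = 0
      · exact Or.inl h
      · exact Or.inr (hzt0 i (hWmem i (hu₀supp i h)).1)
    · exact sp _ _ _ W Λ hu₀supp hztsupp hcard2
  have ht3 : |Φ.mulVec zt ⬝ᵥ Φ.mulVec v| ≤ δ₃ * (Z * V) := by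
    rw [hZdef, hVdef]
    apply rip_dotProduct Φ hδ₃ hRIP₃
    · intro i
      by_cases h : zt i = 0
      · exact Or.inl h
      · exact Or.inr (by simp [hvdef, hztsupp i h])
    · exact sp _ _ _ Λ (T \ Λ) hztsupp hvsupp hcard3
  have ht4 : (1 - δ₄) * Z ^ 2 ≤ l2norm (Φ.mulVec zt) ^ 2 := by
    rw [hZdef]
    exact (hRIP₄ zt (isSparse_of_subset hztsupp (le_of_eq hΛ))).1
  clear_value V Z
  have hZbound : Z ≤ δ₃ * V / (1 - δ₄) := by
    have h4 : (1 - δ₄) * Z ^ 2 ≤ δ₃ * (Z * V) :=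
      le_trans ht4 (le_trans (hkey ▸ le_abs_self _) ht3)
    rcases eq_or_lt_of_le hZnn with hZ0 | hZ0
    · rw [← hZ0]
      positivity
    · rw [le_div_iff₀ hδ₄pos]
      refine (mul_le_mul_iff_of_pos_right hZ0).mp ?_
      calc Z * (1 - δ₄) * Z = (1 - δ₄) * Z ^ 2 := by ring
        _ ≤ δ₃ * (Z * V) := h4
        _ = δ₃ * V * Z := by ring
  -- combining
  have hcV : c ^ 2 ≤ c * ((δ₁ + δ₂ * δ₃ / (1 - δ₄)) * V) := by
    have e1 : c ^ 2 = Φ.mulVec u₀ ⬝ᵥ Φ.mulVec v - Φ.mulVec u₀ ⬝ᵥ Φ.mulVec zt := by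
      rw [hc2, hrv, hMv, ← hΦzt, dotProduct_sub]
    have h5 : c ^ 2 ≤ δ₁ * (c * V) + δ₂ * (c * Z) := by
      rw [e1]
      have := abs_le.mp ht1
      have := abs_le.mp ht2
      linarith
    have h6 : δ₂ * (c * Z) ≤ δ₂ * (c * (δ₃ * V / (1 - δ₄))) := by
      apply mul_le_mul_of_nonneg_left _ hδ₂
      exact mul_le_mul_of_nonneg_left hZbound hcnn
    calc c ^ 2 ≤ δ₁ * (c * V) + δ₂ * (c * (δ₃ * V / (1 - δ₄))) := by linarith
      _ = c * ((δ₁ + δ₂ * δ₃ / (1 - δ₄)) * V) := by field_simp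
  have hcle : c ≤ (δ₁ + δ₂ * δ₃ / (1 - δ₄)) * V := by
    rcases eq_or_lt_of_le hcnn with hc0 | hc0
    · rw [← hc0]
      positivity
    · refine (mul_le_mul_iff_of_pos_left hc0).mp ?_
      calc c * c = c ^ 2 := by ring
        _ ≤ c * ((δ₁ + δ₂ * δ₃ / (1 - δ₄)) * V) := hcV
  -- V equals the sqrt of the sum in the statement
  have hVeq : V = Real.sqrt (∑ i ∈ T \ Λ, x i ^ 2) := by
    rw [hVdef]
    unfold l2norm
    congr 1
    rw [← Finset.sum_subset (Finset.subset_univ (T \ Λ))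
      (fun i _ hi => by
        have : v i = 0 := by
          by_contra h; exact hi (hvsupp i h)
        rw [this]; exact zero_pow (by norm_num))]
    apply Finset.sum_congr rfl
    intro i hi
    have : i ∉ Λ := (Finset.mem_sdiff.mp hi).2
    simp [hvdef, this]
  -- conclude
  have hsN : (0:ℝ) < Real.sqrt N := Real.sqrt_pos.mpr (by exact_mod_cast hN)
  have hαN : α * Real.sqrt N ≤ c := by
    have hsq : (α * Real.sqrt N) ^ 2 ≤ c ^ 2 := by
      have : (α * Real.sqrt N) ^ 2 = (N : ℝ) * α ^ 2 := by
        rw [mul_pow, Real.sq_sqrt (by positivity : (0:ℝ) ≤ N)]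
        ring
      rw [this]
      exact hNα
    have h1 : 0 ≤ α * Real.sqrt N := mul_nonneg hα0 (Real.sqrt_nonneg _)
    calc α * Real.sqrt N = Real.sqrt ((α * Real.sqrt N) ^ 2) := (Real.sqrt_sq h1).symm
      _ ≤ Real.sqrt (c ^ 2) := Real.sqrt_le_sqrt hsq
      _ = c := Real.sqrt_sq hcnn
  rw [div_eq_mul_inv, ← hVeq]
  calc α = α * Real.sqrt N * (Real.sqrt N)⁻¹ := by
        rw [mul_assoc, mul_inv_cancel₀ (ne_of_gt hsN), mul_one]
    _ ≤ (δ₁ + δ₂ * δ₃ / (1 - δ₄)) * V * (Real.sqrt N)⁻¹ := by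
        apply mul_le_mul_of_nonneg_right (le_trans hαN hcle)
        positivity
end

section
/- Let Λ, S ⊂ {1,…,n} be disjoint with |Λ| = a, |S| = b, and suppose δ_a < 1 and δ_{a+b} < 1 where δ_s are the RIP constants of Φ. Then for any u supported on S, ‖P_Λ Φ_S u_S‖₂² ≤ (δ_{a+b}² (1+δ_a)/(1-δ_a)²) ‖u‖₂², where P_Λ is the orthogonal projection onto span(Φ_Λ). -/
open Matrix

def extV {n : ℕ} (I : Finset (Fin n)) (v : I → ℝ) : Fin n → ℝ :=
  fun i => if h : i ∈ I then v ⟨i, h⟩ else 0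

lemma extV_not_mem {n : ℕ} (I : Finset (Fin n)) (v : I → ℝ) {i : Fin n} (h : i ∉ I) :
    extV I v i = 0 := dif_neg h

lemma sum_mul_extV {n : ℕ} (I : Finset (Fin n)) (v : I → ℝ) (f : Fin n → ℝ) :
    ∑ i, f i * extV I v i = ∑ j : I, f (j : Fin n) * v j := by
  rw [← Finset.sum_subset (Finset.subset_univ I)
    (fun i _ hi => by rw [extV_not_mem I v hi, mul_zero])]
  rw [Finset.univ_eq_attach, ← Finset.sum_attach I (fun i => f i * extV I v i)]
  refine Finset.sum_congr rfl fun j _ => ?_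
  simp [extV, j.2]

lemma sum_sq_extV {n : ℕ} (I : Finset (Fin n)) (v : I → ℝ) :
    ∑ i, extV I v i ^ 2 = ∑ j : I, v j ^ 2 := by
  have := sum_mul_extV I v (extV I v)
  simp only [sq]
  rw [this]
  refine Finset.sum_congr rfl fun j _ => ?_
  simp [extV, j.2]

lemma colSub_mulVec {m n : ℕ} (Φ : Matrix (Fin m) (Fin n) ℝ) (I : Finset (Fin n)) (v : I → ℝ) :
    (colSub Φ I).mulVec v = Φ.mulVec (extV I v) := by
  funext i
  simp only [Matrix.mulVec, dotProduct, colSub]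
  exact (sum_mul_extV I v (fun j => Φ i j)).symm

lemma sparse_of_subset {n K : ℕ} (I : Finset (Fin n)) (h : I.card ≤ K) (x : Fin n → ℝ)
    (hx : ∀ i, i ∉ I → x i = 0) : IsSparse K x := by
  refine le_trans (Finset.card_le_card ?_) h
  intro i hi
  simp only [Finset.mem_filter, Finset.mem_univ, true_and] at hi
  by_contra hiI
  exact hi (hx i hiI)

lemma sum_add_sq {ι : Type*} [Fintype ι] (x y : ι → ℝ) :
    ∑ i, (x i + y i) ^ 2 = ∑ i, x i ^ 2 + 2 * (∑ i, x i * y i) + ∑ i, y i ^ 2 := by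
  rw [Finset.mul_sum, ← Finset.sum_add_distrib, ← Finset.sum_add_distrib]
  exact Finset.sum_congr rfl fun i _ => by ring

lemma sum_sub_sq {ι : Type*} [Fintype ι] (x y : ι → ℝ) :
    ∑ i, (x i - y i) ^ 2 = ∑ i, x i ^ 2 - 2 * (∑ i, x i * y i) + ∑ i, y i ^ 2 := by
  rw [Finset.mul_sum, ← Finset.sum_sub_distrib, ← Finset.sum_add_distrib]
  exact Finset.sum_congr rfl fun i _ => by ring

/-- key inner-product bound for disjointly supported vectors -/
lemma disjoint_inner_bound {m n : ℕ} (Φ : Matrix (Fin m) (Fin n) ℝ)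
    (Λ S : Finset (Fin n)) (a b : ℕ) (ha : Λ.card = a) (hb : S.card = b)
    (δab : ℝ) (hRIPab : SatisfiesRIP Φ (a + b) δab)
    (v u : Fin n → ℝ) (hv : ∀ i, i ∉ Λ → v i = 0) (hu : ∀ i, i ∉ S → u i = 0)
    (hvu : ∀ i, v i * u i = 0) (t : ℝ) :
    2 * t * (∑ i, Φ.mulVec v i * Φ.mulVec u i) ≤
      δab * (t ^ 2 * ∑ i, v i ^ 2 + ∑ i, u i ^ 2) := by
  have hsupp : ∀ (c : ℝ) (x : Fin n → ℝ), (∀ i, i ∉ S → x i = 0) →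
      IsSparse (a + b) (fun i => c * v i + x i) := by
    intro c x hx
    refine sparse_of_subset (Λ ∪ S) ?_ _ ?_
    · calc (Λ ∪ S).card ≤ Λ.card + S.card := Finset.card_union_le _ _
        _ = a + b := by rw [ha, hb]
    · intro i hi
      simp only [Finset.mem_union, not_or] at hi
      rw [hv i hi.1, hx i hi.2, mul_zero, add_zero]
  have h1 := (hRIPab (fun i => t * v i + u i) (hsupp t u hu)).2
  have h2 := (hRIPab (fun i => t * v i + (-u) i)
    (hsupp t (-u) (fun i hi => by simp [hu i hi]))).1
  rw [l2norm_sq, l2norm_sq] at h1 h2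
  have hm1 : Φ.mulVec (fun i => t * v i + u i) =
      fun i => t * Φ.mulVec v i + Φ.mulVec u i := by
    funext i
    simp only [Matrix.mulVec, dotProduct, Finset.mul_sum, ← Finset.sum_add_distrib]
    exact Finset.sum_congr rfl fun j _ => by ring
  have hm2 : Φ.mulVec (fun i => t * v i + (-u) i) =
      fun i => t * Φ.mulVec v i - Φ.mulVec u i := by
    funext i
    simp only [Matrix.mulVec, dotProduct, Pi.neg_apply, Finset.mul_sum,
      ← Finset.sum_sub_distrib]
    exact Finset.sum_congr rfl fun j _ => by ring
  rw [hm1] at h1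
  rw [hm2] at h2
  have e1 : ∑ i, (t * Φ.mulVec v i + Φ.mulVec u i) ^ 2 =
      t ^ 2 * ∑ i, Φ.mulVec v i ^ 2 + 2 * t * (∑ i, Φ.mulVec v i * Φ.mulVec u i)
        + ∑ i, Φ.mulVec u i ^ 2 := by
    rw [Finset.mul_sum, Finset.mul_sum, ← Finset.sum_add_distrib, ← Finset.sum_add_distrib]
    exact Finset.sum_congr rfl fun i _ => by ring
  have e2 : ∑ i, (t * Φ.mulVec v i - Φ.mulVec u i) ^ 2 =
      t ^ 2 * ∑ i, Φ.mulVec v i ^ 2 - 2 * t * (∑ i, Φ.mulVec v i * Φ.mulVec u i)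
        + ∑ i, Φ.mulVec u i ^ 2 := by
    rw [Finset.mul_sum, Finset.mul_sum, ← Finset.sum_sub_distrib, ← Finset.sum_add_distrib]
    exact Finset.sum_congr rfl fun i _ => by ring
  have e3 : ∀ s : ℝ, ∑ i, (t * v i + s * u i) ^ 2 = t ^ 2 * ∑ i, v i ^ 2
      + s ^ 2 * ∑ i, u i ^ 2 := by
    intro s
    rw [Finset.mul_sum, Finset.mul_sum, ← Finset.sum_add_distrib]
    refine Finset.sum_congr rfl fun i _ => ?_
    linear_combination (2 * t * s) * hvu i
  have e4 : ∑ i, (t * v i + u i) ^ 2 = t ^ 2 * ∑ i, v i ^ 2 + ∑ i, u i ^ 2 := by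
    have := e3 1; simpa using this
  have e5 : ∑ i, (t * v i + (-u) i) ^ 2 = t ^ 2 * ∑ i, v i ^ 2 + ∑ i, u i ^ 2 := by
    have h := e3 (-1)
    have : ∑ i, (t * v i + (-u) i) ^ 2 = ∑ i, (t * v i + (-1) * u i) ^ 2 :=
      Finset.sum_congr rfl fun i _ => by simp only [Pi.neg_apply]; ring
    rw [this, h]; ring
  rw [e1, e4] at h1
  rw [e2, e5] at h2
  linarith

theorem projection_disjoint_bound {m n : ℕ} (Φ : Matrix (Fin m) (Fin n) ℝ)
    (Λ S : Finset (Fin n)) (hdisj : Disjoint Λ S) (a b : ℕ)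
    (ha : Λ.card = a) (hb : S.card = b)
    (hrank : IsUnit ((colSub Φ Λ)ᵀ * colSub Φ Λ))
    (δa δab : ℝ) (hδa0 : 0 ≤ δa) (hδa1 : δa < 1)
    (hδab0 : 0 ≤ δab) (hδab1 : δab < 1)
    (hRIPa : SatisfiesRIP Φ a δa) (hRIPab : SatisfiesRIP Φ (a + b) δab)
    (u : Fin n → ℝ) (hsupp : ∀ i, i ∉ S → u i = 0) :
    l2norm ((colSub Φ Λ * ((colSub Φ Λ)ᵀ * colSub Φ Λ)⁻¹ * (colSub Φ Λ)ᵀ).mulVec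
        (Φ.mulVec u)) ^ 2 ≤
      δab ^ 2 * (1 + δa) / (1 - δa) ^ 2 * l2norm u ^ 2 := by
  classical
  set A := colSub Φ Λ with hA
  set G := Aᵀ * A with hGdef
  set z : Λ → ℝ := Aᵀ.mulVec (Φ.mulVec u) with hzdef
  set w : Λ → ℝ := G⁻¹.mulVec z with hwdef
  have hdet : IsUnit G.det := (Matrix.isUnit_iff_isUnit_det G).mp hrank
  have hvec : (A * G⁻¹ * Aᵀ).mulVec (Φ.mulVec u) = A.mulVec w := by
    rw [hwdef, hzdef]
    simp only [Matrix.mulVec_mulVec, Matrix.mul_assoc]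
  have hGw : G.mulVec w = z := by
    rw [hwdef, Matrix.mulVec_mulVec, Matrix.mul_nonsing_inv G hdet, Matrix.one_mulVec]
  -- notation for squared norms
  set NW : ℝ := ∑ j : Λ, w j ^ 2 with hNW
  set NZ : ℝ := ∑ j : Λ, z j ^ 2 with hNZ
  set NU : ℝ := ∑ i, u i ^ 2 with hNU
  set NAw : ℝ := ∑ i, (A.mulVec w) i ^ 2 with hNAw
  have hNWnn : 0 ≤ NW := Finset.sum_nonneg fun i _ => sq_nonneg _
  have hNZnn : 0 ≤ NZ := Finset.sum_nonneg fun i _ => sq_nonneg _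
  have hNUnn : 0 ≤ NU := Finset.sum_nonneg fun i _ => sq_nonneg _
  -- RIP of order a applied to extensions of vectors supported on Λ
  have hsparseΛ : ∀ v : Λ → ℝ, IsSparse a (extV Λ v) := fun v =>
    sparse_of_subset Λ (le_of_eq ha) _ (fun i hi => extV_not_mem Λ v hi)
  have hRIPw := hRIPa (extV Λ w) (hsparseΛ w)
  rw [l2norm_sq, l2norm_sq, sum_sq_extV, ← colSub_mulVec, ← hA] at hRIPw
  -- w ⬝ z equals ‖A w‖²
  have hwz : ∑ j : Λ, w j * z j = NAw := by
    have h1 : ∑ j : Λ, w j * z j = w ⬝ᵥ z := rfl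
    rw [h1, ← hGw, hGdef, ← Matrix.mulVec_mulVec, Matrix.dotProduct_mulVec,
      Matrix.vecMul_transpose]
    simp [dotProduct, sq, hNAw]
  -- ‖z‖² as an inner product of images of disjointly supported vectors
  have hz2 : NZ = ∑ i, Φ.mulVec (extV Λ z) i * Φ.mulVec u i := by
    have h1 : NZ = z ⬝ᵥ z := by simp [hNZ, dotProduct, sq]
    rw [h1]
    conv_lhs => rw [hzdef, Matrix.dotProduct_mulVec, Matrix.vecMul_transpose,
      colSub_mulVec]
    rfl
  -- bound NZ ≤ δab² NU
  have hdib := disjoint_inner_bound Φ Λ S a b ha hb δab hRIPab (extV Λ z) u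
    (fun i hi => extV_not_mem Λ z hi) hsupp
    (fun i => by
      by_cases hi : i ∈ Λ
      · rw [hsupp i (Finset.disjoint_left.mp hdisj hi), mul_zero]
      · rw [extV_not_mem Λ z hi, zero_mul])
  rw [sum_sq_extV] at hdib
  have hNZb : NZ ≤ δab ^ 2 * NU := by
    rcases eq_or_lt_of_le hδab0 with h0 | h0
    · have := hdib 1
      rw [← hz2, ← h0] at this
      nlinarith
    · have hthis := hdib (1 / δab)
      rw [← hz2, ← hNZ, ← hNU] at hthis
      have hδ : δab ≠ 0 := ne_of_gt h0
      have key := mul_le_mul_of_nonneg_left hthis (le_of_lt h0)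
      have e1 : δab * (2 * (1 / δab) * NZ) = 2 * NZ := by field_simp
      have e2 : δab * (δab * ((1 / δab) ^ 2 * NZ + NU)) = NZ + δab ^ 2 * NU := by
        field_simp
      rw [e1, e2] at key
      linarith
  -- Cauchy–Schwarz and the lower RIP bound give (1-δa)² NW ≤ NZ
  have hCS : (∑ j : Λ, w j * z j) ^ 2 ≤ NW * NZ :=
    Finset.sum_mul_sq_le_sq_mul_sq Finset.univ w z
  have hlow : (1 - δa) * NW ≤ ∑ j : Λ, w j * z j := by
    rw [hwz]; exact hRIPw.1
  have hNWb : (1 - δa) ^ 2 * NW ≤ NZ := by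
    rcases eq_or_lt_of_le hNWnn with h0 | h0
    · rw [← h0, mul_zero]; exact hNZnn
    · have hDpos : 0 < (1 - δa) * NW := mul_pos (by linarith) h0
      have hD : 0 < ∑ j : Λ, w j * z j := lt_of_lt_of_le hDpos hlow
      have hsq := mul_le_mul hlow hlow (le_of_lt hDpos) (le_of_lt hD)
      nlinarith [hsq, hCS, h0]
  -- assemble
  rw [l2norm_sq, l2norm_sq, hvec, ← hNAw, ← hNU]
  have hup : NAw ≤ (1 + δa) * NW := hRIPw.2
  rw [div_mul_eq_mul_div, le_div_iff₀ (pow_pos (by linarith : (0:ℝ) < 1 - δa) 2)]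
  nlinarith [mul_le_mul_of_nonneg_right hup (sq_nonneg (1 - δa)),
    mul_le_mul_of_nonneg_left hNWb (by linarith : (0:ℝ) ≤ 1 + δa),
    mul_le_mul_of_nonneg_left hNZb (by linarith : (0:ℝ) ≤ 1 + δa)]
end
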